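/- In the silo graph G_d (d ≥ 3), there is a path of length d-2 from (1,2) to (i,d) for each i ∈ [d-1] \ {2}, and there is a path of length d-2 from (1,2) to (d,d-1). -/

import Mathlib

/-- A valid vertex of the `d`-th silo graph: a pair of distinct elements of `{1,…,d}`. -/
def siloValid (d : ℕ) (p : ℕ × ℕ) : Prop :=
  1 ≤ p.1 ∧ p.1 ≤ d ∧ 1 ≤ p.2 ∧ p.2 ≤ d ∧ p.1 ≠ p.2

/-- One direction of the silo graph adjacency (from the lower second coordinate up). -/
def siloStep (p q : ℕ × ℕ) : Prop :=
  (p.1 ≠ q.1 ∧ p.2 = q.2) ∨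
  (q.2 = p.2 + 1 ∧ q.1 = p.1 ∧ p.2 ≠ p.1 - 1) ∨
  (q.2 = p.2 + 2 ∧ q.1 = p.1 ∧ p.2 = p.1 - 1)

/-- The `d`-th silo graph `G_d`. -/
def siloGraph (d : ℕ) : SimpleGraph (ℕ × ℕ) where
  Adj p q := siloValid d p ∧ siloValid d q ∧ (siloStep p q ∨ siloStep q p)
  symm := ⟨fun p q h => ⟨h.2.1, h.1, h.2.2.symm⟩⟩
  loopless := ⟨by
    rintro p ⟨_, _, h | h⟩ <;>
      rcases h with ⟨h1, h2⟩ | ⟨h1, _, _⟩ | ⟨h1, _, _⟩ <;> omega⟩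

open SimpleGraph Walk

/-- Vertical walk in a single column. -/
lemma silo_upWalk (d a : ℕ) (ha1 : 1 ≤ a) (had : a ≤ d) :
    ∀ n b, 1 ≤ b → b + n ≤ d → (a + 1 ≤ b ∨ b + n + 1 ≤ a) →
    ∃ w : (siloGraph d).Walk (a, b) (a, b + n),
      w.IsPath ∧ w.length = n ∧ ∀ v ∈ w.support, v.1 = a ∧ b ≤ v.2 ∧ v.2 ≤ b + n := by
  intro n
  induction n with
  | zero =>
    intro b hb1 hbd _
    exact ⟨Walk.nil, by simp, by simp, by simp⟩
  | succ n ih =>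
    intro b hb1 hbd hcond
    obtain ⟨w, hw, hlen, hsup⟩ := ih (b + 1) (by omega) (by omega) (by omega)
    have hadj : (siloGraph d).Adj (a, b) (a, b + 1) := by
      refine ⟨⟨?_, ?_, ?_, ?_, ?_⟩, ⟨?_, ?_, ?_, ?_, ?_⟩,
        Or.inl (Or.inr (Or.inl ⟨rfl, rfl, ?_⟩))⟩ <;> simp <;> omega
    have hkey : b + 1 + n = b + (n + 1) := by omega
    refine ⟨(Walk.cons hadj w).copy rfl (by rw [hkey]), ?_, ?_, ?_⟩
    · rw [Walk.isPath_copy]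
      refine hw.cons ?_
      intro hmem
      have := hsup _ hmem
      omega
    · simp [hlen]
    · intro v hv
      rw [Walk.support_copy, Walk.support_cons] at hv
      rcases List.mem_cons.1 hv with h | h
      · subst h; omega
      · have := hsup _ h; omega

theorem silo_paths_from_12 (d : ℕ) (hd : 3 ≤ d) :
    (∀ i : ℕ, 1 ≤ i → i ≤ d - 1 → i ≠ 2 →
      ∃ p : (siloGraph d).Walk (1, 2) (i, d), p.IsPath ∧ p.length = d - 2) ∧
    (∃ p : (siloGraph d).Walk (1, 2) (d, d - 1), p.IsPath ∧ p.length = d - 2) := by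
  constructor
  · intro i hi1 hid hi2
    rcases eq_or_lt_of_le hi1 with h1 | h3
    · -- i = 1
      subst h1
      obtain ⟨w, hw, hlen, -⟩ :=
        silo_upWalk d 1 le_rfl (by omega) (d - 2) 2 (by omega) (by omega) (by omega)
      exact ⟨w.copy rfl (by rw [show 2 + (d - 2) = d by omega]), by simpa using hw,
        by simpa using hlen⟩
    · -- i ≥ 3
      have hi3 : 3 ≤ i := by omega
      have e0 : (siloGraph d).Adj (1, 2) (i, 2) := by
        refine ⟨⟨?_, ?_, ?_, ?_, ?_⟩, ⟨?_, ?_, ?_, ?_, ?_⟩, Or.inl (Or.inl ⟨?_, rfl⟩)⟩ <;>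
          simp <;> omega
      obtain ⟨w1, hw1, hlen1, hsup1⟩ :=
        silo_upWalk d i (by omega) (by omega) (i - 3) 2 (by omega) (by omega) (by omega)
      obtain ⟨w2, hw2, hlen2, hsup2⟩ :=
        silo_upWalk d i (by omega) (by omega) (d - i - 1) (i + 1) (by omega) (by omega)
          (by omega)
      have hc1 : ((i, 2 + (i - 3)) : ℕ × ℕ) = (i, i - 1) := by
        simp only [Prod.mk.injEq, true_and]; omega
      have hc2 : ((i, i + 1 + (d - i - 1)) : ℕ × ℕ) = (i, d) := by
        simp only [Prod.mk.injEq, true_and]; omega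
      have e1 : (siloGraph d).Adj (i, i - 1) (i, i + 1) := by
        refine ⟨⟨?_, ?_, ?_, ?_, ?_⟩, ⟨?_, ?_, ?_, ?_, ?_⟩,
          Or.inl (Or.inr (Or.inr ⟨?_, rfl, ?_⟩))⟩ <;> simp <;> omega
      refine ⟨Walk.cons e0 ((w1.copy rfl hc1).append (Walk.cons e1 (w2.copy rfl hc2))),
        ?_, ?_⟩
      · rw [Walk.isPath_def, Walk.support_cons, Walk.support_append, Walk.support_cons,
          List.tail_cons, List.nodup_cons, Walk.support_copy, Walk.support_copy]
        constructor
        · intro hmem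
          rcases List.mem_append.1 hmem with h | h
          · have := hsup1 _ h; omega
          · have := hsup2 _ h; omega
        · refine List.Nodup.append hw1.support_nodup hw2.support_nodup ?_
          intro v hv1 hv2
          have h1 := hsup1 _ hv1
          have h2 := hsup2 _ hv2
          omega
      · simp [hlen1, hlen2]; omega
  · -- (d, d-1)
    obtain ⟨w, hw, hlen, hsup⟩ :=
      silo_upWalk d 1 le_rfl (by omega) (d - 3) 2 (by omega) (by omega) (by omega)
    have hc : ((1, 2 + (d - 3)) : ℕ × ℕ) = (1, d - 1) := by
      simp only [Prod.mk.injEq, true_and]; omega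
    have e : (siloGraph d).Adj (1, d - 1) (d, d - 1) := by
      refine ⟨⟨?_, ?_, ?_, ?_, ?_⟩, ⟨?_, ?_, ?_, ?_, ?_⟩, Or.inl (Or.inl ⟨?_, rfl⟩)⟩ <;>
        simp <;> omega
    refine ⟨(w.copy rfl hc).append (Walk.cons e Walk.nil), ?_, ?_⟩
    · rw [Walk.isPath_def, Walk.support_append, Walk.support_cons, Walk.support_copy]
      simp only [Walk.support_nil, List.tail_cons]
      refine List.Nodup.append hw.support_nodup (by simp) ?_
      intro v hv1 hv2
      simp only [List.mem_singleton] at hv2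
      subst hv2
      have := hsup _ hv1
      simp only at this
      omega
    · simp [hlen]; omega
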